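/- arXiv:2008.01646 — 6 statements merged into one kernel-verified Lean document; each statement's English description precedes it below -/
import Mathlib

section
/- Let (Ω, 𝓕, P) be a probability space equipped with a filtration (𝓕_t)_{t∈ℕ}. Let L, q : ℕ → Ω → ℝ be processes adapted to the filtration such that for every t, L_t and q_t are integrable, L_t ≥ 0 almost surely and q_t ≥ 0 almost surely. Let B̂ ∈ ℝ and ε > 0, and suppose that for every t ∈ ℕ the conditional drift bound E[L_{t+1} ∣ 𝓕_t] ≤ L_t + B̂ − ε·q_t holds almost surely. Then for every integer T ≥ 1, (1/T)·Σ_{t=0}^{T−1} E[q_t] ≤ B̂/ε + E[L_0]/(ε·T); in particular, limsup_{T→∞} (1/T)·Σ_{t=0}^{T−1} E[q_t] ≤ B̂/ε. -/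
open MeasureTheory Filter

/-- Lyapunov drift engine: if a nonnegative adapted Lyapunov process `L` has conditional
one-step drift bounded by `B̂ - ε·q t` for a nonnegative adapted penalty process `q`, then the
time-averaged expected penalty is bounded by `B̂/ε + E[L 0]/(ε·T)`, and its limsup by `B̂/ε`. -/
theorem lyapunov_drift_time_average
    {Ω : Type*} {m0 : MeasurableSpace Ω} (μ : Measure Ω) [IsProbabilityMeasure μ]
    (ℱ : Filtration ℕ m0) (L q : ℕ → Ω → ℝ)
    (hLadapted : Adapted ℱ L) (hqadapted : Adapted ℱ q)
    (hLint : ∀ t, Integrable (L t) μ) (hqint : ∀ t, Integrable (q t) μ)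
    (hLpos : ∀ t, 0 ≤ᵐ[μ] L t) (hqpos : ∀ t, 0 ≤ᵐ[μ] q t)
    (B : ℝ) (ε : ℝ) (hε : 0 < ε)
    (hdrift : ∀ t : ℕ, μ[L (t + 1) | ℱ t] ≤ᵐ[μ] fun ω => L t ω + B - ε * q t ω) :
    (∀ T : ℕ, 1 ≤ T →
      (1 / (T : ℝ)) * ∑ t ∈ Finset.range T, ∫ ω, q t ω ∂μ
        ≤ B / ε + (∫ ω, L 0 ω ∂μ) / (ε * T)) ∧
    limsup (fun T : ℕ => (1 / (T : ℝ)) * ∑ t ∈ Finset.range T, ∫ ω, q t ω ∂μ) atTop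
      ≤ B / ε := by
  -- one-step expectation bound
  have hstep : ∀ t : ℕ, (∫ ω, L (t + 1) ω ∂μ) ≤ (∫ ω, L t ω ∂μ) + B - ε * ∫ ω, q t ω ∂μ := by
    intro t
    have h1 : (∫ ω, L (t + 1) ω ∂μ) = ∫ ω, (μ[L (t + 1) | ℱ t]) ω ∂μ :=
      (integral_condExp (ℱ.le t)).symm
    have hadd : Integrable (fun ω => L t ω + B) μ := (hLint t).add (integrable_const B)
    have hmul : Integrable (fun ω => ε * q t ω) μ := (hqint t).const_mul ε
    have h2 : (∫ ω, (μ[L (t + 1) | ℱ t]) ω ∂μ) ≤ ∫ ω, (L t ω + B - ε * q t ω) ∂μ :=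
      integral_mono_ae integrable_condExp (hadd.sub hmul) (hdrift t)
    have h3 : (∫ ω, (L t ω + B - ε * q t ω) ∂μ)
        = (∫ ω, L t ω ∂μ) + B - ε * ∫ ω, q t ω ∂μ := by
      rw [integral_sub hadd hmul, integral_add (hLint t) (integrable_const B),
        integral_const, integral_const_mul]
      simp
    rw [h3] at h2
    rw [h1]
    exact h2
  -- telescoping
  have hsum : ∀ T : ℕ, (∫ ω, L T ω ∂μ) + ε * ∑ t ∈ Finset.range T, ∫ ω, q t ω ∂μ
      ≤ (∫ ω, L 0 ω ∂μ) + T * B := by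
    intro T
    induction T with
    | zero => simp
    | succ n ih =>
      rw [Finset.sum_range_succ]
      have := hstep n
      push_cast
      nlinarith
  have hLnn : ∀ T : ℕ, 0 ≤ ∫ ω, L T ω ∂μ := fun T =>
    integral_nonneg_of_ae (hLpos T)
  have hqnn : ∀ T : ℕ, 0 ≤ ∑ t ∈ Finset.range T, ∫ ω, q t ω ∂μ := fun T =>
    Finset.sum_nonneg fun t _ => integral_nonneg_of_ae (hqpos t)
  have key : ∀ T : ℕ, 1 ≤ T →
      (1 / (T : ℝ)) * ∑ t ∈ Finset.range T, ∫ ω, q t ω ∂μ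
        ≤ B / ε + (∫ ω, L 0 ω ∂μ) / (ε * T) := by
    intro T hT
    have hT0 : (0 : ℝ) < T := by exact_mod_cast hT
    have h := hsum T
    have h' : ε * ∑ t ∈ Finset.range T, ∫ ω, q t ω ∂μ ≤ (∫ ω, L 0 ω ∂μ) + T * B := by
      linarith [hLnn T]
    have hS : ∑ t ∈ Finset.range T, ∫ ω, q t ω ∂μ ≤ ((∫ ω, L 0 ω ∂μ) + T * B) / ε :=
      (le_div_iff₀ hε).mpr (by linarith)
    calc (1 / (T : ℝ)) * ∑ t ∈ Finset.range T, ∫ ω, q t ω ∂μ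
        ≤ (1 / (T : ℝ)) * (((∫ ω, L 0 ω ∂μ) + T * B) / ε) := by
          apply mul_le_mul_of_nonneg_left hS; positivity
      _ = B / ε + (∫ ω, L 0 ω ∂μ) / (ε * T) := by
          field_simp; ring
  refine ⟨key, ?_⟩
  have hg : Tendsto (fun T : ℕ => B / ε + (∫ ω, L 0 ω ∂μ) / (ε * T)) atTop
      (nhds (B / ε + 0)) := by
    apply Tendsto.const_add
    have : (fun T : ℕ => (∫ ω, L 0 ω ∂μ) / (ε * T))
        = fun T : ℕ => ((∫ ω, L 0 ω ∂μ) / ε) * (1 / (T : ℝ)) := by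
      funext T; rw [div_mul_eq_div_div]; ring
    rw [this]
    simpa using (tendsto_one_div_atTop_nhds_zero_nat.const_mul ((∫ ω, L 0 ω ∂μ) / ε))
  rw [add_zero] at hg
  have hle : (fun T : ℕ => (1 / (T : ℝ)) * ∑ t ∈ Finset.range T, ∫ ω, q t ω ∂μ)
      ≤ᶠ[atTop] fun T : ℕ => B / ε + (∫ ω, L 0 ω ∂μ) / (ε * T) := by
    filter_upwards [eventually_ge_atTop 1] with T hT using key T hT
  calc limsup (fun T : ℕ => (1 / (T : ℝ)) * ∑ t ∈ Finset.range T, ∫ ω, q t ω ∂μ) atTop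
      ≤ limsup (fun T : ℕ => B / ε + (∫ ω, L 0 ω ∂μ) / (ε * T)) atTop := by
        refine limsup_le_limsup hle ?_ hg.isBoundedUnder_le
        refine IsCoboundedUnder.of_frequently_ge (a := 0) (Frequently.of_forall fun T => ?_)
        exact mul_nonneg (by positivity) (hqnn T)
    _ = B / ε := hg.limsup_eq
end

section
/- Let S (switches) and C (controllers) be finite types. Let Q^S : S → ℝ and Q^C : C → ℝ be nonnegative, let λ : S → ℝ satisfy 0 ≤ λ_i ≤ λ_max for all i, let μ^S : S → ℝ and μ^C : C → ℝ satisfy 0 ≤ μ^S_i ≤ μ_max and 0 ≤ μ^C_j ≤ μ_max, and let I_{i,k} ∈ {0,1} for each i ∈ S and each k ∈ {i} ∪ C satisfy I_{i,i} + Σ_{j∈C} I_{i,j} = 1 for every i. Define the updated backlogs Q^S_i' = [Q^S_i + I_{i,i}·λ_i − μ^S_i]⁺ and Q^C_j' = [Q^C_j + Σ_{i∈S} I_{i,j}·λ_i − μ^C_j]⁺, and the Lyapunov function L(Q) = (1/2)·Σ_{i∈S} (Q^S_i)² + (1/2)·Σ_{j∈C} (Q^C_j)². Then L(Q') − L(Q)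 ≤ (1/2)·(|S| + |C|)·μ_max² + (1/2)·|S|²·λ_max² + Σ_{i∈S} Q^S_i·(I_{i,i}·λ_i − μ^S_i) + Σ_{j∈C} Q^C_j·(Σ_{i∈S} I_{i,j}·λ_i − μ^C_j). -/
lemma sdn_key (Q A mu : ℝ) (_hQ : 0 ≤ Q) (hA : 0 ≤ A) (hmu : 0 ≤ mu) :
    (max 0 (Q + A - mu)) ^ 2 ≤ Q ^ 2 + A ^ 2 + mu ^ 2 + 2 * (Q * (A - mu)) := by
  rcases le_or_gt (Q + A - mu) 0 with h | h
  · rw [max_eq_left h]; nlinarith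
  · rw [max_eq_right h.le]; nlinarith

lemma sdn_sum_sq {ι : Type*} [Fintype ι] (f : ι → ℝ) (h : ∀ i, 0 ≤ f i) :
    ∑ i, (f i) ^ 2 ≤ (∑ i, f i) ^ 2 := by
  rw [sq (∑ i, f i), Finset.sum_mul]
  refine Finset.sum_le_sum fun i _ => ?_
  rw [sq]
  exact mul_le_mul_of_nonneg_left
    (Finset.single_le_sum (fun j _ => h j) (Finset.mem_univ i)) (h i)

/-- One-slot Lyapunov drift bound for the SDN switch/controller queueing model. -/
theorem sdn_one_slot_drift_bound
    {S C : Type*} [Fintype S] [Fintype C]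
    (QS : S → ℝ) (QC : C → ℝ) (hQS : ∀ i, 0 ≤ QS i) (hQC : ∀ j, 0 ≤ QC j)
    (lam : S → ℝ) (lamMax : ℝ) (hlam : ∀ i, 0 ≤ lam i ∧ lam i ≤ lamMax)
    (muS : S → ℝ) (muC : C → ℝ) (muMax : ℝ)
    (hmuS : ∀ i, 0 ≤ muS i ∧ muS i ≤ muMax)
    (hmuC : ∀ j, 0 ≤ muC j ∧ muC j ≤ muMax)
    (Iself : S → ℝ) (I : S → C → ℝ)
    (hIself : ∀ i, Iself i = 0 ∨ Iself i = 1)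
    (hI : ∀ i j, I i j = 0 ∨ I i j = 1)
    (hone : ∀ i, Iself i + ∑ j, I i j = 1) :
    (((1 : ℝ) / 2) * ∑ i, (max 0 (QS i + Iself i * lam i - muS i)) ^ 2
        + ((1 : ℝ) / 2) * ∑ j, (max 0 (QC j + (∑ i, I i j * lam i) - muC j)) ^ 2)
      - (((1 : ℝ) / 2) * ∑ i, (QS i) ^ 2 + ((1 : ℝ) / 2) * ∑ j, (QC j) ^ 2)
    ≤ ((1 : ℝ) / 2) * ((Fintype.card S : ℝ) + (Fintype.card C : ℝ)) * muMax ^ 2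
      + ((1 : ℝ) / 2) * (Fintype.card S : ℝ) ^ 2 * lamMax ^ 2
      + ∑ i, QS i * (Iself i * lam i - muS i)
      + ∑ j, QC j * ((∑ i, I i j * lam i) - muC j) := by
  have hIs0 : ∀ i, 0 ≤ Iself i := fun i => by rcases hIself i with h | h <;> simp [h]
  have hI0 : ∀ i j, 0 ≤ I i j := fun i j => by rcases hI i j with h | h <;> simp [h]
  set A : S → ℝ := fun i => Iself i * lam i with hA
  set B : C → ℝ := fun j => ∑ i, I i j * lam i with hB
  have hA0 : ∀ i, 0 ≤ A i := fun i => mul_nonneg (hIs0 i) (hlam i).1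
  have hB0 : ∀ j, 0 ≤ B j := fun j =>
    Finset.sum_nonneg fun i _ => mul_nonneg (hI0 i j) (hlam i).1
  -- pointwise bounds
  have hS : ∀ i, (max 0 (QS i + A i - muS i)) ^ 2 ≤
      QS i ^ 2 + A i ^ 2 + muS i ^ 2 + 2 * (QS i * (A i - muS i)) :=
    fun i => sdn_key _ _ _ (hQS i) (hA0 i) (hmuS i).1
  have hC : ∀ j, (max 0 (QC j + B j - muC j)) ^ 2 ≤
      QC j ^ 2 + B j ^ 2 + muC j ^ 2 + 2 * (QC j * (B j - muC j)) :=
    fun j => sdn_key _ _ _ (hQC j) (hB0 j) (hmuC j).1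
  -- arrival squares bound
  have hAB : (∑ i, A i) + (∑ j, B j) ≤ (Fintype.card S : ℝ) * lamMax := by
    have : (∑ i, A i) + (∑ j, B j) = ∑ i, lam i := by
      simp only [hA, hB]
      rw [Finset.sum_comm, ← Finset.sum_add_distrib]
      refine Finset.sum_congr rfl fun i _ => ?_
      rw [← Finset.sum_mul, ← add_mul, hone i, one_mul]
    rw [this]
    calc ∑ i, lam i ≤ ∑ _i : S, lamMax := Finset.sum_le_sum fun i _ => (hlam i).2
      _ = (Fintype.card S : ℝ) * lamMax := by simp [Finset.sum_const, nsmul_eq_mul]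
  have harr : (∑ i, A i ^ 2) + (∑ j, B j ^ 2) ≤ (Fintype.card S : ℝ) ^ 2 * lamMax ^ 2 := by
    have h1 := sdn_sum_sq A hA0
    have h2 := sdn_sum_sq B hB0
    have hAn : 0 ≤ ∑ i, A i := Finset.sum_nonneg fun i _ => hA0 i
    have hBn : 0 ≤ ∑ j, B j := Finset.sum_nonneg fun j _ => hB0 j
    nlinarith [hAB, mul_nonneg hAn hBn]
  have hmuSb : ∑ i, muS i ^ 2 ≤ (Fintype.card S : ℝ) * muMax ^ 2 := by
    calc ∑ i, muS i ^ 2 ≤ ∑ _i : S, muMax ^ 2 :=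
          Finset.sum_le_sum fun i _ => pow_le_pow_left₀ (hmuS i).1 (hmuS i).2 2
      _ = (Fintype.card S : ℝ) * muMax ^ 2 := by simp [Finset.sum_const, nsmul_eq_mul]
  have hmuCb : ∑ j, muC j ^ 2 ≤ (Fintype.card C : ℝ) * muMax ^ 2 := by
    calc ∑ j, muC j ^ 2 ≤ ∑ _j : C, muMax ^ 2 :=
          Finset.sum_le_sum fun j _ => pow_le_pow_left₀ (hmuC j).1 (hmuC j).2 2
      _ = (Fintype.card C : ℝ) * muMax ^ 2 := by simp [Finset.sum_const, nsmul_eq_mul]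
  have hSsum := Finset.sum_le_sum (fun i (_ : i ∈ Finset.univ) => hS i)
  have hCsum := Finset.sum_le_sum (fun j (_ : j ∈ Finset.univ) => hC j)
  simp only [Finset.sum_add_distrib, ← Finset.mul_sum] at hSsum hCsum
  have e1 : ∑ i, QS i * (A i - muS i) = ∑ i, QS i * (Iself i * lam i - muS i) := rfl
  have e2 : ∑ j, QC j * (B j - muC j) = ∑ j, QC j * ((∑ i, I i j * lam i) - muC j) := rfl
  rw [← e1, ← e2]
  nlinarith [hSsum, hCsum, harr, hmuSb, hmuCb]
end

section
/- Let ι be a type, let 𝓕 be a nonempty finite family of finite subsets of ι, let Q, x̄, x̃ : ι → ℝ, and let V ∈ ℝ. Suppose f ∈ 𝓕 minimizes f'' ↦ Σ_{n∈f''} (Q_n − V·x̃_n) over 𝓕, and f' ∈ 𝓕 minimizes f'' ↦ Σ_{n∈f''} (Q_n − V·x̄_n) over 𝓕. Then for every f* ∈ 𝓕, Σ_{n∈f} (Q_n − V·x̄_n) − Σ_{n∈f*} (Q_n − V·x̄_n) ≤ V·( Σ_{n∈f} (x̃_n − x̄_n) + Σ_{n∈f'} (x̄_n − x̃_n) ).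 -/
/-- Key decomposition `Z₁(t) ≤ V·(Z₂(t) + Z₃(t))`: the learning-aided greedy super arm `f`
is compared against any feasible super arm `f*` via the auxiliary super arm `f'` that is
greedy with respect to the true means. -/
theorem greedy_comparison_decomposition
    {ι : Type*} (F : Finset (Finset ι)) (hF : F.Nonempty)
    (Q xbar xtil : ι → ℝ) (V : ℝ)
    (f : Finset ι) (hf : f ∈ F)
    (hfmin : ∀ f'' ∈ F, ∑ n ∈ f, (Q n - V * xtil n) ≤ ∑ n ∈ f'', (Q n - V * xtil n))
    (f' : Finset ι) (hf' : f' ∈ F)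
    (hf'min : ∀ f'' ∈ F, ∑ n ∈ f', (Q n - V * xbar n) ≤ ∑ n ∈ f'', (Q n - V * xbar n))
    (fstar : Finset ι) (hfstar : fstar ∈ F) :
    (∑ n ∈ f, (Q n - V * xbar n)) - ∑ n ∈ fstar, (Q n - V * xbar n)
      ≤ V * ((∑ n ∈ f, (xtil n - xbar n)) + ∑ n ∈ f', (xbar n - xtil n)) := by
  have h1 := hfmin f' hf'
  have h2 := hf'min fstar hfstar
  have e1 : ∑ n ∈ f, (Q n - V * xbar n)
      = (∑ n ∈ f, (Q n - V * xtil n)) + V * ∑ n ∈ f, (xtil n - xbar n) := by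
    rw [Finset.mul_sum, ← Finset.sum_add_distrib]; apply Finset.sum_congr rfl
    intro n _; ring
  have e2 : ∑ n ∈ f', (Q n - V * xtil n)
      = (∑ n ∈ f', (Q n - V * xbar n)) + V * ∑ n ∈ f', (xbar n - xtil n) := by
    rw [Finset.mul_sum, ← Finset.sum_add_distrib]; apply Finset.sum_congr rfl
    intro n _; ring
  nlinarith [h1, h2]
end

section
/- Work on a probability space (Ω, 𝓕, P). Let (X_i)_{i≥1} be independent, identically distributed real-valued random variables with X_i ∈ [−1, 0] almost surely and common mean m = E[X_1] (so m ∈ [−1, 0]); write x̂_n := (1/n)·Σ_{i=1}^{n} X_i for the sample mean of the first n observations. Let β > √2, let T ≥ 1 and h ≤ T be natural numbers, and let t_2 < t_3 < ⋯ < t_h be strictly increasing integers with 1 ≤ t_a ≤ T for all a ∈ {2, …, h}. For a ∈ {2, …, h} define the truncated UCB estimate x̃_a := min( x̂_{a−1} + β·√( log(t_a) / (4·(a−1)) ), 0 ). Then Σ_{a=2}^{h} E[ max(0, x̃_a − m) ] ≤ 2·β·√( h·log T ) + G_β, where G_β := Σ_{t=1}^{∞} t^{−β²/2} (which is finite for β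 > √2). -/
open MeasureTheory ProbabilityTheory

open Real


/-- generic: f 0 = 0, f has deriv f' everywhere, f' ≥ 0 on [0,∞) ⟹ 0 ≤ f u for u ≥ 0 -/
lemma nonneg_of_deriv {f f' : ℝ → ℝ} (hd : ∀ x, HasDerivAt f (f' x) x)
    (h0 : f 0 = 0) (hpos : ∀ x, 0 ≤ x → 0 ≤ f' x) {u : ℝ} (hu : 0 ≤ u) : 0 ≤ f u := by
  have hmono : MonotoneOn f (Set.Ici (0:ℝ)) := by
    apply monotoneOn_of_deriv_nonneg (convex_Ici 0)
      (fun x _ => (hd x).continuousAt.continuousWithinAt)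
      (fun x hx => ((hd x).differentiableAt).differentiableWithinAt)
    intro x hx
    rw [interior_Ici] at hx
    rw [(hd x).deriv]
    exact hpos x hx.le
  calc (0:ℝ) = f 0 := h0.symm
  _ ≤ f u := hmono (by simp) (by simpa) hu

lemma hoeffding_core {p u : ℝ} (hp0 : 0 ≤ p) (hp1 : p ≤ 1) (hu : 0 ≤ u) :
    1 - p + p * exp u ≤ exp (p * u + u ^ 2 / 8) := by
  have hD : ∀ x : ℝ, 0 < 1 - p + p * exp x := by
    intro x
    rcases eq_or_lt_of_le hp1 with h | h
    · simp [← h]; positivity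
    · have : 0 < 1 - p := by linarith
      nlinarith [exp_pos x, mul_nonneg hp0 (exp_pos x).le]
  -- φ x = p * exp x / D x - p, with φ 0 = 0 and deriv ≤ 1/4; show φ x ≤ x/4 for x ≥ 0
  set D : ℝ → ℝ := fun x => 1 - p + p * exp x with hDdef
  have hDd : ∀ x, HasDerivAt D (p * exp x) x := by
    intro x
    simpa [hDdef] using ((Real.hasDerivAt_exp x).const_mul p).const_add (1 - p)
  set φ : ℝ → ℝ := fun x => p * exp x / D x - p with hφdef
  have hφd : ∀ x, HasDerivAt φ (p * exp x * (1 - p) / (D x) ^ 2) x := by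
    intro x
    have h1 : HasDerivAt (fun x => p * exp x / D x)
        ((p * exp x * D x - p * exp x * (p * exp x)) / (D x) ^ 2) x :=
      ((Real.hasDerivAt_exp x).const_mul p).div (hDd x) (hD x).ne'
    have : (p * exp x * D x - p * exp x * (p * exp x)) / (D x) ^ 2
        = p * exp x * (1 - p) / (D x) ^ 2 := by
      rw [hDdef]; ring_nf
    rw [this] at h1
    simpa [hφdef] using h1.sub_const p
  have hφle : ∀ x, 0 ≤ x → φ x ≤ x / 4 := by
    intro x hx
    have := nonneg_of_deriv (f := fun x => x / 4 - φ x)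
      (f' := fun x => 1 / 4 - p * exp x * (1 - p) / (D x) ^ 2)
      (fun x => ((hasDerivAt_id x).div_const 4).sub (hφd x))
      (by simp [hφdef, hDdef])
      (fun x _ => by
        have h4 : 4 * (p * exp x * (1 - p)) ≤ (1 - p + p * exp x) ^ 2 := by
          nlinarith [sq_nonneg ((1 - p) - p * exp x)]
        rw [sub_nonneg, div_le_div_iff₀ (pow_pos (hD x) 2) (by norm_num : (0:ℝ) < 4)]
        linarith) hx
    linarith
  -- f x = p*x + x^2/8 - log (D x) ; f' = p + x/4 - p e^x / D = x/4 - φ x ≥ 0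
  have hf : ∀ x : ℝ, 0 ≤ x → Real.log (D x) ≤ p * x + x ^ 2 / 8 := by
    intro x hx
    have := nonneg_of_deriv (f := fun x => p * x + x ^ 2 / 8 - Real.log (D x))
      (f' := fun x => p + x / 4 - p * exp x / D x)
      (fun x => by
        have h1 : HasDerivAt (fun x => p * x + x ^ 2 / 8) (p + 2 * x / 8) x := by
          exact HasDerivAt.add (by simpa using (hasDerivAt_id' x).const_mul p)
            (by simpa using (hasDerivAt_pow 2 x).div_const 8)
        have h2 : HasDerivAt (fun x => Real.log (D x)) (p * exp x / D x) x :=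
          (hDd x).log (hD x).ne'
        have := h1.sub h2
        exact this.congr_deriv (by ring))
      (by simp [hDdef])
      (fun x hx => by have := hφle x hx; simp only [hφdef] at this; linarith) hx
    linarith
  have := hf u hu
  calc 1 - p + p * exp u = exp (Real.log (D u)) := by rw [Real.exp_log (hD u)]
  _ ≤ exp (p * u + u ^ 2 / 8) := exp_le_exp.mpr this

open MeasureTheory ProbabilityTheory

lemma mgf_bound {Ω : Type*} {m0 : MeasurableSpace Ω} (μ : Measure Ω) [IsProbabilityMeasure μ]
    (Y : Ω → ℝ) (hY : Measurable Y) (hb : ∀ᵐ ω ∂μ, Y ω ∈ Set.Icc (-1 : ℝ) 0)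
    {l : ℝ} (hl : 0 ≤ l) :
    mgf Y μ l ≤ exp (l * (∫ ω, Y ω ∂μ) + l ^ 2 / 8) := by
  have hYint : Integrable Y μ := by
    refine (integrable_const (1:ℝ)).mono' hY.aestronglyMeasurable ?_
    filter_upwards [hb] with ω hω
    rw [Real.norm_eq_abs, abs_le]; constructor <;> [linarith [hω.1]; linarith [hω.2]]
  set m' := ∫ ω, Y ω ∂μ with hm'
  have hm'le : m' ≤ 0 := by
    rw [hm']
    calc ∫ ω, Y ω ∂μ ≤ ∫ _ω, (0:ℝ) ∂μ :=
      integral_mono_ae hYint (integrable_const 0) (by filter_upwards [hb] with ω hω using hω.2)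
    _ = 0 := by simp
  have hm'ge : -1 ≤ m' := by
    rw [hm']
    calc (-1:ℝ) = ∫ _ω, (-1:ℝ) ∂μ := by simp
    _ ≤ ∫ ω, Y ω ∂μ :=
      integral_mono_ae (integrable_const (-1)) hYint (by filter_upwards [hb] with ω hω using hω.1)
  have hptwise : ∀ᵐ ω ∂μ, exp (l * Y ω) ≤ (-(Y ω)) * exp (-l) + (Y ω + 1) := by
    filter_upwards [hb] with ω hω
    have h := convexOn_exp.2 (Set.mem_univ (-l)) (Set.mem_univ 0)
      (by linarith [hω.2] : 0 ≤ -(Y ω)) (by linarith [hω.1] : 0 ≤ Y ω + 1) (by ring)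
    simpa [smul_eq_mul, mul_comm] using h
  have hintL : Integrable (fun ω => exp (l * Y ω)) μ := by
    refine (integrable_const (1:ℝ)).mono' ((hY.const_mul l).exp).aestronglyMeasurable ?_
    filter_upwards [hb] with ω hω
    rw [Real.norm_eq_abs, abs_of_pos (exp_pos _)]
    calc exp (l * Y ω) ≤ exp 0 := exp_le_exp.mpr (by nlinarith [hω.2])
    _ = 1 := exp_zero
  have hintR : Integrable (fun ω => (-(Y ω)) * exp (-l) + (Y ω + 1)) μ := by
    exact ((hYint.neg.mul_const _).add (hYint.add (integrable_const 1)))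
  have h1 : mgf Y μ l ≤ (-m') * exp (-l) + (m' + 1) := by
    calc mgf Y μ l ≤ ∫ ω, ((-(Y ω)) * exp (-l) + (Y ω + 1)) ∂μ :=
      integral_mono_ae hintL hintR hptwise
    _ = (-m') * exp (-l) + (m' + 1) := by
      have e1 : ∫ ω, ((-(Y ω)) * exp (-l) + (Y ω + 1)) ∂μ
          = (∫ ω, -(Y ω) ∂μ) * exp (-l) + ((∫ ω, Y ω ∂μ) + 1) := by
        have i1 : Integrable (fun ω => -(Y ω) * exp (-l)) μ := hYint.neg.mul_const _
        have i2 : Integrable (fun ω => Y ω + 1) μ := hYint.add (integrable_const 1)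
        rw [integral_add i1 i2, integral_mul_const, integral_add hYint (integrable_const 1)]
        simp
      rw [e1, integral_neg, ← hm']
  have h2 : (-m') * exp (-l) + (m' + 1) ≤ exp (l * m' + l ^ 2 / 8) := by
    have hcore := hoeffding_core (p := m' + 1) (u := l) (by linarith) (by linarith) hl
    have : exp (l * m' + l ^ 2 / 8) = exp (-l) * exp ((m' + 1) * l + l ^ 2 / 8) := by
      rw [← Real.exp_add]; congr 1; ring
    rw [this]
    have h3 : (-m') * exp (-l) + (m' + 1)
        ≤ exp (-l) * (1 - (m' + 1) + (m' + 1) * exp l) := by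
      have : exp (-l) * (1 - (m' + 1) + (m' + 1) * exp l)
          = (-m') * exp (-l) + (m' + 1) * (exp (-l) * exp l) := by ring
      rw [this, ← Real.exp_add, neg_add_cancel, exp_zero, mul_one]
    exact h3.trans (by
      have := mul_le_mul_of_nonneg_left hcore (exp_pos (-l)).le
      linarith)
  exact h1.trans h2

lemma chernoff {Ω : Type*} {m0 : MeasurableSpace Ω} (μ : Measure Ω) [IsProbabilityMeasure μ]
    (X : ℕ → Ω → ℝ) (hmeas : ∀ i, Measurable (X i))
    (hindep : iIndepFun X μ)
    (hident : ∀ i, IdentDistrib (X i) (X 0) μ μ)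
    (hbdd : ∀ i, ∀ᵐ ω ∂μ, X i ω ∈ Set.Icc (-1 : ℝ) 0)
    (m : ℝ) (hm : m = ∫ ω, X 0 ω ∂μ) (n : ℕ) (c : ℝ) (hc : 0 ≤ c) :
    (μ {ω | (n : ℝ) * (m + c) ≤ ∑ i ∈ Finset.range n, X i ω}).toReal
      ≤ exp (-2 * n * c ^ 2) := by
  set l := 4 * c with hl
  have hl0 : 0 ≤ l := by positivity
  have hint : ∀ i, Integrable (fun ω => exp (l * X i ω)) μ := by
    intro i
    refine (integrable_const (1:ℝ)).mono' (((hmeas i).const_mul l).exp).aestronglyMeasurable ?_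
    filter_upwards [hbdd i] with ω hω
    rw [Real.norm_eq_abs, abs_of_pos (exp_pos _)]
    calc exp (l * X i ω) ≤ exp 0 := exp_le_exp.mpr (by nlinarith [hω.2])
    _ = 1 := exp_zero
  have hSint : Integrable (fun ω => exp (l * (∑ i ∈ Finset.range n, X i) ω)) μ :=
    hindep.integrable_exp_mul_sum hmeas (fun i _ => hint i)
  have hmain := measure_ge_le_exp_mul_mgf (X := ∑ i ∈ Finset.range n, X i) (μ := μ)
    ((n : ℝ) * (m + c)) hl0 hSint
  have hset : {ω | (n : ℝ) * (m + c) ≤ (∑ i ∈ Finset.range n, X i) ω}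
      = {ω | (n : ℝ) * (m + c) ≤ ∑ i ∈ Finset.range n, X i ω} := by
    ext ω; simp [Finset.sum_apply]
  rw [hset] at hmain
  have hmgf : mgf (∑ i ∈ Finset.range n, X i) μ l ≤ (exp (l * m + l ^ 2 / 8)) ^ n := by
    rw [hindep.mgf_sum hmeas]
    have heq : ∀ i ∈ Finset.range n, mgf (X i) μ l = mgf (X 0) μ l := by
      intro i _
      exact ((hident i).comp (measurable_exp.comp (measurable_const_mul l))).integral_eq
    rw [Finset.prod_congr rfl heq, Finset.prod_const, Finset.card_range]
    exact pow_le_pow_left₀ mgf_nonneg (by rw [hm]; exact mgf_bound μ (X 0) (hmeas 0) (hbdd 0) hl0) n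
  calc (μ {ω | (n : ℝ) * (m + c) ≤ ∑ i ∈ Finset.range n, X i ω}).toReal
      ≤ exp (-l * ((n : ℝ) * (m + c))) * mgf (∑ i ∈ Finset.range n, X i) μ l := hmain
  _ ≤ exp (-l * ((n : ℝ) * (m + c))) * (exp (l * m + l ^ 2 / 8)) ^ n := by
      exact mul_le_mul_of_nonneg_left hmgf (exp_pos _).le
  _ = exp (-2 * n * c ^ 2) := by
      rw [← Real.exp_nat_mul, ← Real.exp_add]
      congr 1
      rw [hl]; ring

lemma per_term {Ω : Type*} {m0 : MeasurableSpace Ω} (μ : Measure Ω) [IsProbabilityMeasure μ]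
    (S : Ω → ℝ) (hS : Measurable S) (n : ℕ) (hn : 1 ≤ n) (m c : ℝ)
    (hm1 : -1 ≤ m) (hm0 : m ≤ 0) (hc : 0 ≤ c) :
    ∫ ω, max 0 (min ((1 / (n : ℝ)) * S ω + c) 0 - m) ∂μ
      ≤ 2 * c + (μ {ω | (n : ℝ) * (m + c) ≤ S ω}).toReal := by
  set A : Set Ω := {ω | (n : ℝ) * (m + c) ≤ S ω} with hA
  have hAm : MeasurableSet A := measurableSet_le measurable_const hS
  have hnpos : (0:ℝ) < (n:ℝ) := by exact_mod_cast hn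
  have hpt : ∀ ω, max 0 (min ((1 / (n : ℝ)) * S ω + c) 0 - m)
      ≤ 2 * c + A.indicator (fun _ => (1:ℝ)) ω := by
    intro ω
    by_cases hω : ω ∈ A
    · rw [Set.indicator_of_mem hω]
      have h1 : min ((1 / (n : ℝ)) * S ω + c) 0 - m ≤ 1 := by
        have := min_le_right ((1 / (n : ℝ)) * S ω + c) 0
        linarith
      have : max 0 (min ((1 / (n : ℝ)) * S ω + c) 0 - m) ≤ 1 :=
        max_le (by linarith) h1
      linarith
    · rw [Set.indicator_of_notMem hω, add_zero]
      have hlt : S ω < (n : ℝ) * (m + c) := by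
        simp only [hA, Set.mem_setOf_eq, not_le] at hω; exact hω
      have h2 : (1 / (n : ℝ)) * S ω < m + c := by
        rw [div_mul_eq_mul_div, one_mul, div_lt_iff₀ hnpos, mul_comm]
        exact hlt
      have h1 : min ((1 / (n : ℝ)) * S ω + c) 0 - m ≤ 2 * c := by
        have := min_le_left ((1 / (n : ℝ)) * S ω + c) 0
        linarith
      exact max_le (by linarith) h1
  have hintR : Integrable (fun ω => 2 * c + A.indicator (fun _ => (1:ℝ)) ω) μ :=
    (integrable_const (2 * c)).add ((integrable_const (1:ℝ)).indicator hAm)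
  calc ∫ ω, max 0 (min ((1 / (n : ℝ)) * S ω + c) 0 - m) ∂μ
      ≤ ∫ ω, (2 * c + A.indicator (fun _ => (1:ℝ)) ω) ∂μ :=
        integral_mono_of_nonneg (ae_of_all _ fun ω => le_max_left _ _) hintR
          (ae_of_all _ hpt)
  _ = 2 * c + (μ A).toReal := by
      rw [integral_add (integrable_const _) ((integrable_const (1:ℝ)).indicator hAm),
        integral_const, integral_indicator_const _ hAm]
      simp; rfl
  _ = 2 * c + (μ A).toReal := rfl

lemma sum_inv_sqrt : ∀ h : ℕ, ∑ a ∈ Finset.Icc 2 h, 1 / Real.sqrt ((a:ℝ) - 1)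
    ≤ 2 * Real.sqrt ((h:ℝ)) := by
  have key : ∀ h : ℕ, 1 ≤ h → ∑ a ∈ Finset.Icc 2 h, 1 / Real.sqrt ((a:ℝ) - 1)
      ≤ 2 * Real.sqrt ((h:ℝ) - 1) := by
    intro h hh
    induction h with
    | zero => omega
    | succ k ih =>
      rcases Nat.lt_or_ge k 1 with hk | hk
      · interval_cases k
        simp
      · rw [Finset.sum_Icc_succ_top (by omega : 2 ≤ k + 1), ]
        have hkpos : (0:ℝ) < (k:ℝ) := by exact_mod_cast hk
        have hterm : ((k:ℝ) + 1) - 1 = (k:ℝ) := by ring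
        push_cast
        rw [hterm]
        have ihk := ih hk
        set s := Real.sqrt ((k:ℝ) - 1) with hs
        set u := Real.sqrt (k:ℝ) with hu
        have hk1 : (1:ℝ) ≤ (k:ℝ) := by exact_mod_cast hk
        have hs0 : 0 ≤ s := Real.sqrt_nonneg _
        have hu0 : 0 < u := Real.sqrt_pos.mpr hkpos
        have hs2 : s ^ 2 = (k:ℝ) - 1 := Real.sq_sqrt (by linarith : (0:ℝ) ≤ (k:ℝ) - 1)
        have hu2 : u ^ 2 = (k:ℝ) := Real.sq_sqrt hkpos.le
        have hstep : 2 * s + 1 / u ≤ 2 * u := by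
          rw [← sub_nonneg]
          have h1 : 2 * u - (2 * s + 1 / u) = (2 * u ^ 2 - 2 * s * u - 1) / u := by
            field_simp; ring
          rw [h1]
          apply div_nonneg _ hu0.le
          nlinarith [sq_nonneg (u - s)]
        calc ∑ a ∈ Finset.Icc 2 k, 1 / Real.sqrt ((a:ℝ) - 1) + 1 / u
            ≤ 2 * s + 1 / u := by push_cast at ihk; linarith
        _ ≤ 2 * u := hstep
  intro h
  rcases Nat.lt_or_ge h 1 with hh | hh
  · interval_cases h; simp
  · refine (key h hh).trans ?_
    have : Real.sqrt ((h:ℝ) - 1) ≤ Real.sqrt ((h:ℝ)) :=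
      Real.sqrt_le_sqrt (by linarith)
    linarith

/-- Per-arm overestimation bound: the cumulative expected amount by which the truncated UCB
estimate exceeds the true mean, over the successive plays of an arm occurring at strictly
increasing time slots `t a ≤ T`, is at most `2β√(h log T) + G_β`. -/
theorem ucb_overestimate_sum_bound
    {Ω : Type*} {m0 : MeasurableSpace Ω} (μ : Measure Ω) [IsProbabilityMeasure μ]
    (X : ℕ → Ω → ℝ) (hmeas : ∀ i, Measurable (X i))
    (hindep : iIndepFun X μ)
    (hident : ∀ i, IdentDistrib (X i) (X 0) μ μ)
    (hbdd : ∀ i, ∀ᵐ ω ∂μ, X i ω ∈ Set.Icc (-1 : ℝ) 0)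
    (m : ℝ) (hm : m = ∫ ω, X 0 ω ∂μ)
    (β : ℝ) (hβ : Real.sqrt 2 < β)
    (T h : ℕ) (hT : 1 ≤ T) (hh : h ≤ T)
    (t : ℕ → ℕ)
    (hmono : ∀ a, 2 ≤ a → a < h → t a < t (a + 1))
    (hrange : ∀ a, 2 ≤ a → a ≤ h → 1 ≤ t a ∧ t a ≤ T) :
    ∑ a ∈ Finset.Icc 2 h,
        ∫ ω, max 0
          ((min ((1 / ((a : ℝ) - 1)) * ∑ i ∈ Finset.range (a - 1), X i ω
              + β * Real.sqrt (Real.log (t a) / (4 * ((a : ℝ) - 1)))) 0) - m) ∂μ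
      ≤ 2 * β * Real.sqrt ((h : ℝ) * Real.log T)
        + ∑' n : ℕ, ((n : ℝ) + 1) ^ (-(β ^ 2) / 2) := by
  have hβ0 : 0 < β := lt_of_le_of_lt (Real.sqrt_nonneg 2) hβ
  have hβ2 : 2 < β ^ 2 := by
    nlinarith [Real.sq_sqrt (by norm_num : (0:ℝ) ≤ 2), Real.sqrt_nonneg 2]
  -- bounds on m
  have hX0int : Integrable (X 0) μ := by
    refine (integrable_const (1:ℝ)).mono' (hmeas 0).aestronglyMeasurable ?_
    filter_upwards [hbdd 0] with ω hω
    rw [Real.norm_eq_abs, abs_le]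
    exact ⟨hω.1, hω.2.trans (by norm_num)⟩
  have hmle : m ≤ 0 := by
    rw [hm]
    have h0 : ∫ ω, X 0 ω ∂μ ≤ ∫ _ω, (0:ℝ) ∂μ :=
      integral_mono_ae hX0int (integrable_const 0)
        (by filter_upwards [hbdd 0] with ω hω using hω.2)
    simpa using h0
  have hmge : -1 ≤ m := by
    rw [hm]
    have h0 : ∫ _ω, (-1:ℝ) ∂μ ≤ ∫ ω, X 0 ω ∂μ :=
      integral_mono_ae (integrable_const (-1)) hX0int
        (by filter_upwards [hbdd 0] with ω hω using hω.1)
    simpa using h0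
  -- summability
  have hsum : Summable (fun n : ℕ => ((n : ℝ) + 1) ^ (-(β ^ 2) / 2)) := by
    have h1 : Summable (fun n : ℕ => ((n : ℝ)) ^ (-(β ^ 2) / 2)) :=
      Real.summable_nat_rpow.mpr (by linarith)
    have h2 := (summable_nat_add_iff 1).mpr h1
    refine h2.congr fun n => ?_
    push_cast
    norm_num
  -- strict monotonicity of t
  have hstrict : ∀ a b, 2 ≤ a → a < b → b ≤ h → t a < t b := by
    intro a b ha hab hbh
    induction b with
    | zero => omega
    | succ k ih =>
      rcases Nat.lt_or_ge a k with hk | hk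
      · exact (ih (by omega) (by omega)).trans (hmono k (by omega) (by omega))
      · have : a = k := by omega
        subst this
        exact hmono a ha (by omega)
  -- per-term bound
  have hterm : ∀ a ∈ Finset.Icc 2 h,
      (∫ ω, max 0
          ((min ((1 / ((a : ℝ) - 1)) * ∑ i ∈ Finset.range (a - 1), X i ω
              + β * Real.sqrt (Real.log (t a) / (4 * ((a : ℝ) - 1)))) 0) - m) ∂μ)
      ≤ 2 * (β * Real.sqrt (Real.log (t a) / (4 * ((a : ℝ) - 1))))
        + ((t a : ℝ)) ^ (-(β ^ 2) / 2) := by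
    intro a ha
    rw [Finset.mem_Icc] at ha
    obtain ⟨ha2, hah⟩ := ha
    have hcast : ((a : ℝ) - 1) = ((a - 1 : ℕ) : ℝ) := by
      have : (1:ℕ) ≤ a := by omega
      push_cast [Nat.cast_sub this]
      ring
    set n := a - 1 with hn
    have hn1 : 1 ≤ n := by omega
    set ca := β * Real.sqrt (Real.log (t a) / (4 * ((a : ℝ) - 1))) with hca
    have hca0 : 0 ≤ ca := by positivity
    have hSmeas : Measurable (fun ω => ∑ i ∈ Finset.range n, X i ω) := by
      apply Finset.measurable_sum
      exact fun i _ => hmeas i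
    have h1 := per_term μ (fun ω => ∑ i ∈ Finset.range n, X i ω) hSmeas n hn1 m ca
      hmge hmle hca0
    have h2 := chernoff μ X hmeas hindep hident hbdd m hm n ca hca0
    have hta1 : 1 ≤ t a := (hrange a ha2 hah).1
    have htpos : (0:ℝ) < (t a : ℝ) := by exact_mod_cast Nat.lt_of_lt_of_le Nat.zero_lt_one hta1
    have hlog0 : (0:ℝ) ≤ Real.log (t a) := Real.log_nonneg (by exact_mod_cast hta1)
    have hnpos : (0:ℝ) < (n : ℝ) := by exact_mod_cast hn1
    have harg : (0:ℝ) ≤ Real.log (t a) / (4 * ((a : ℝ) - 1)) := by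
      rw [hcast]
      positivity
    have hsq : ca ^ 2 = β ^ 2 * (Real.log (t a) / (4 * ((a : ℝ) - 1))) := by
      rw [hca, mul_pow, Real.sq_sqrt harg]
    have h3 : Real.exp (-2 * (n : ℝ) * ca ^ 2) = (t a : ℝ) ^ (-(β ^ 2) / 2) := by
      rw [Real.rpow_def_of_pos htpos, hsq, hcast]
      congr 1
      field_simp
      ring
    have hgoal_eq : (∫ ω, max 0
          ((min ((1 / ((a : ℝ) - 1)) * ∑ i ∈ Finset.range n, X i ω + ca) 0) - m) ∂μ)
        = ∫ ω, max 0 ((min ((1 / ((n:ℕ) : ℝ)) * ∑ i ∈ Finset.range n, X i ω + ca) 0) - m) ∂μ := by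
      simp only [hcast]
    rw [hgoal_eq]
    calc (∫ ω, max 0 ((min ((1 / ((n:ℕ) : ℝ)) * ∑ i ∈ Finset.range n, X i ω + ca) 0) - m) ∂μ)
        ≤ 2 * ca + (μ {ω | (n : ℝ) * (m + ca) ≤ ∑ i ∈ Finset.range n, X i ω}).toReal := h1
    _ ≤ 2 * ca + Real.exp (-2 * (n : ℝ) * ca ^ 2) := by linarith
    _ = 2 * ca + (t a : ℝ) ^ (-(β ^ 2) / 2) := by rw [h3]
  calc ∑ a ∈ Finset.Icc 2 h,
        ∫ ω, max 0
          ((min ((1 / ((a : ℝ) - 1)) * ∑ i ∈ Finset.range (a - 1), X i ω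
              + β * Real.sqrt (Real.log (t a) / (4 * ((a : ℝ) - 1)))) 0) - m) ∂μ
      ≤ ∑ a ∈ Finset.Icc 2 h,
          (2 * (β * Real.sqrt (Real.log (t a) / (4 * ((a : ℝ) - 1))))
            + ((t a : ℝ)) ^ (-(β ^ 2) / 2)) := Finset.sum_le_sum hterm
  _ = (∑ a ∈ Finset.Icc 2 h, 2 * (β * Real.sqrt (Real.log (t a) / (4 * ((a : ℝ) - 1)))))
      + ∑ a ∈ Finset.Icc 2 h, ((t a : ℝ)) ^ (-(β ^ 2) / 2) := Finset.sum_add_distrib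
  _ ≤ 2 * β * Real.sqrt ((h : ℝ) * Real.log T)
      + ∑' n : ℕ, ((n : ℝ) + 1) ^ (-(β ^ 2) / 2) := by
    gcongr ?_ + ?_
    · -- main term
      have hlogT0 : (0:ℝ) ≤ Real.log T := Real.log_nonneg (by exact_mod_cast hT)
      have step1 : ∀ a ∈ Finset.Icc 2 h,
          2 * (β * Real.sqrt (Real.log (t a) / (4 * ((a : ℝ) - 1))))
          ≤ β * Real.sqrt (Real.log T) * (1 / Real.sqrt ((a : ℝ) - 1)) := by
        intro a ha
        rw [Finset.mem_Icc] at ha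
        have ha1 : (1:ℝ) ≤ (a : ℝ) - 1 := by
          have : (2:ℝ) ≤ (a:ℝ) := by exact_mod_cast ha.1
          linarith
        have hrpos : (0:ℝ) < (a : ℝ) - 1 := by linarith
        have hlogle : Real.log (t a) ≤ Real.log T := by
          apply Real.log_le_log
          · exact_mod_cast (hrange a ha.1 ha.2).1
          · exact_mod_cast (hrange a ha.1 ha.2).2
        have hlogta : (0:ℝ) ≤ Real.log (t a) :=
          Real.log_nonneg (by exact_mod_cast (hrange a ha.1 ha.2).1)
        have e1 : Real.sqrt (Real.log (t a) / (4 * ((a : ℝ) - 1)))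
            ≤ Real.sqrt (Real.log T / (4 * ((a : ℝ) - 1))) := by
          apply Real.sqrt_le_sqrt
          gcongr
        have e2 : Real.sqrt (Real.log T / (4 * ((a : ℝ) - 1)))
            = Real.sqrt (Real.log T) / (2 * Real.sqrt ((a : ℝ) - 1)) := by
          rw [Real.sqrt_div hlogT0, Real.sqrt_mul (by norm_num : (0:ℝ) ≤ 4),
            show Real.sqrt 4 = 2 by
              rw [show (4:ℝ) = 2 ^ 2 by norm_num, Real.sqrt_sq (by norm_num : (0:ℝ) ≤ 2)]]
        have hspos : (0:ℝ) < Real.sqrt ((a : ℝ) - 1) := Real.sqrt_pos.mpr hrpos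
        calc 2 * (β * Real.sqrt (Real.log (t a) / (4 * ((a : ℝ) - 1))))
            ≤ 2 * (β * (Real.sqrt (Real.log T) / (2 * Real.sqrt ((a : ℝ) - 1)))) := by
              gcongr
              exact e1.trans_eq e2
        _ = β * Real.sqrt (Real.log T) * (1 / Real.sqrt ((a : ℝ) - 1)) := by
              field_simp
      calc ∑ a ∈ Finset.Icc 2 h, 2 * (β * Real.sqrt (Real.log (t a) / (4 * ((a : ℝ) - 1))))
          ≤ ∑ a ∈ Finset.Icc 2 h,
              β * Real.sqrt (Real.log T) * (1 / Real.sqrt ((a : ℝ) - 1)) :=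
            Finset.sum_le_sum step1
      _ = β * Real.sqrt (Real.log T) * ∑ a ∈ Finset.Icc 2 h, 1 / Real.sqrt ((a : ℝ) - 1) := by
            rw [Finset.mul_sum]
      _ ≤ β * Real.sqrt (Real.log T) * (2 * Real.sqrt ((h : ℝ))) := by
            exact mul_le_mul_of_nonneg_left (sum_inv_sqrt h) (by positivity)
      _ = 2 * β * Real.sqrt ((h : ℝ) * Real.log T) := by
            rw [Real.sqrt_mul (Nat.cast_nonneg h)]
            ring
    · -- tail term
      have hinj : ∀ x ∈ Finset.Icc 2 h, ∀ y ∈ Finset.Icc 2 h,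
          t x - 1 = t y - 1 → x = y := by
        intro x hx y hy hxy
        rw [Finset.mem_Icc] at hx hy
        have hx1 := (hrange x hx.1 hx.2).1
        have hy1 := (hrange y hy.1 hy.2).1
        have : t x = t y := by omega
        by_contra hne
        rcases Nat.lt_or_ge x y with hlt | hge
        · have := hstrict x y hx.1 hlt hy.2; omega
        · have : y < x := by omega
          have := hstrict y x hy.1 this hx.2; omega
      have hcast2 : ∀ a ∈ Finset.Icc 2 h,
          ((t a : ℝ)) ^ (-(β ^ 2) / 2) = (((t a - 1 : ℕ) : ℝ) + 1) ^ (-(β ^ 2) / 2) := by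
        intro a ha
        rw [Finset.mem_Icc] at ha
        have := (hrange a ha.1 ha.2).1
        congr 1
        push_cast [Nat.cast_sub this]
        ring
      rw [Finset.sum_congr rfl hcast2]
      rw [show (∑ a ∈ Finset.Icc 2 h, (((t a - 1 : ℕ) : ℝ) + 1) ^ (-(β ^ 2) / 2))
          = ∑ b ∈ (Finset.Icc 2 h).image (fun a => t a - 1),
              (((b : ℕ) : ℝ) + 1) ^ (-(β ^ 2) / 2) from (Finset.sum_image (f := fun b : ℕ => ((b:ℝ) + 1) ^ (-(β ^ 2) / 2)) hinj).symm]
      exact Summable.sum_le_tsum _ (fun b _ => Real.rpow_nonneg (by positivity) _) hsum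
end

section
/- Work on a probability space (Ω, 𝓕, P). Let (X_i)_{i≥1} be independent, identically distributed real-valued random variables with X_i ∈ [−1, 0] almost surely and common mean m = E[X_1] (so m ∈ [−1, 0]); write x̂_n := (1/n)·Σ_{i=1}^{n} X_i for the sample mean of the first n observations. Then for all integers n ≥ 1 and t ≥ 1 and every real β ≥ 0, E[ max(0, m − min( x̂_n + β·√( log(t) / (4n) ), 0 )) ] ≤ t^{−β²/2}. -/
open MeasureTheory ProbabilityTheory

/-- The key scalar inequality behind Hoeffding's lemma. -/
lemma ucb_key_ineq (p : ℝ) (h0 : 0 ≤ p) (h1 : p ≤ 1) (u : ℝ) :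
    1 - p + p * Real.exp u ≤ Real.exp (p * u + u ^ 2 / 8) := by
  have hgpos : ∀ v : ℝ, 0 < 1 - p + p * Real.exp v := by
    intro v
    rcases eq_or_lt_of_le h0 with h | h
    · simp [← h]
    · nlinarith [Real.exp_pos v, mul_pos h (Real.exp_pos v)]
  set f : ℝ → ℝ := fun v => p * v + v ^ 2 / 8 - Real.log (1 - p + p * Real.exp v) with hf
  set f' : ℝ → ℝ := fun v => p + v / 4 - p * Real.exp v / (1 - p + p * Real.exp v) with hf'
  have hgd : ∀ v : ℝ, HasDerivAt (fun w => 1 - p + p * Real.exp w) (p * Real.exp v) v := by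
    intro v
    exact ((Real.hasDerivAt_exp v).const_mul p).const_add (1 - p)
  have hfd : ∀ v, HasDerivAt f (f' v) v := by
    intro v
    have h1d : HasDerivAt (fun w : ℝ => p * w) p v := by
      simpa using (hasDerivAt_id v).const_mul p
    have h2d : HasDerivAt (fun w : ℝ => w ^ 2 / 8) (v / 4) v := by
      have := (hasDerivAt_pow 2 v).div_const 8
      refine this.congr_deriv ?_
      norm_num
      ring
    have h3d : HasDerivAt (fun w => Real.log (1 - p + p * Real.exp w))
        (p * Real.exp v / (1 - p + p * Real.exp v)) v :=
      (hgd v).log (hgpos v).ne'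
    exact (h1d.add h2d).sub h3d
  have hf'd : ∀ v, HasDerivAt f'
      (1 / 4 - p * (1 - p) * Real.exp v / (1 - p + p * Real.exp v) ^ 2) v := by
    intro v
    have hq : HasDerivAt (fun w => p * Real.exp w / (1 - p + p * Real.exp w))
        ((p * Real.exp v * (1 - p + p * Real.exp v) - p * Real.exp v * (p * Real.exp v)) /
          (1 - p + p * Real.exp v) ^ 2) v :=
      ((Real.hasDerivAt_exp v).const_mul p).div (hgd v) (hgpos v).ne'
    have h2d : HasDerivAt (fun w : ℝ => p + w / 4) (1 / 4) v :=
      ((hasDerivAt_id v).div_const 4).const_add p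
    have h := h2d.sub hq
    refine h.congr_deriv ?_
    have hg := (hgpos v).ne'
    congr 1
    congr 1
    ring
  have hf'mono : Monotone f' := by
    apply monotone_of_deriv_nonneg (fun v => (hf'd v).differentiableAt)
    intro v
    rw [(hf'd v).deriv]
    have hgv := hgpos v
    rw [sub_nonneg, div_le_iff₀ (by positivity)]
    nlinarith [sq_nonneg ((1 - p) - p * Real.exp v), Real.exp_pos v]
  have hf'0 : f' 0 = 0 := by
    simp only [hf', Real.exp_zero, mul_one]
    have : 1 - p + p = 1 := by ring
    rw [this]
    simp
  have hfc : Continuous f := by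
    have : Differentiable ℝ f := fun v => (hfd v).differentiableAt
    exact this.continuous
  have hfnn : ∀ v, 0 ≤ f v := by
    intro v
    have hf0 : f 0 = 0 := by
      simp only [hf, Real.exp_zero, mul_one]
      have : 1 - p + p = 1 := by ring
      rw [this]
      simp
    rcases le_total 0 v with hv | hv
    · have hmono : MonotoneOn f (Set.Ici 0) := by
        apply monotoneOn_of_deriv_nonneg (convex_Ici 0) hfc.continuousOn
          (fun x _ => (hfd x).differentiableAt.differentiableWithinAt)
        intro x hx
        rw [interior_Ici] at hx
        rw [(hfd x).deriv]
        have := hf'mono (le_of_lt hx)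
        rw [hf'0] at this
        exact this
      have := hmono (Set.self_mem_Ici) (Set.mem_Ici.mpr hv) hv
      rw [hf0] at this; exact this
    · have hanti : AntitoneOn f (Set.Iic 0) := by
        apply antitoneOn_of_deriv_nonpos (convex_Iic 0) hfc.continuousOn
          (fun x _ => (hfd x).differentiableAt.differentiableWithinAt)
        intro x hx
        rw [interior_Iic] at hx
        rw [(hfd x).deriv]
        have := hf'mono (le_of_lt hx)
        rw [hf'0] at this
        exact this
      have := hanti (Set.mem_Iic.mpr hv) Set.self_mem_Iic hv
      rw [hf0] at this; exact this
  have := hfnn u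
  simp only [hf, sub_nonneg] at this
  calc 1 - p + p * Real.exp u = Real.exp (Real.log (1 - p + p * Real.exp u)) :=
        (Real.exp_log (hgpos u)).symm
    _ ≤ Real.exp (p * u + u ^ 2 / 8) := Real.exp_le_exp.mpr this

/-- Hoeffding's lemma for a centered random variable with range of length 1. -/
lemma ucb_hoeffding_mgf {Ω : Type*} {m0 : MeasurableSpace Ω} (μ : Measure Ω)
    [IsProbabilityMeasure μ] (Y : Ω → ℝ) (hY : Measurable Y) (a : ℝ)
    (hbd : ∀ᵐ ω ∂μ, Y ω ∈ Set.Icc a (a + 1)) (hmean : ∫ ω, Y ω ∂μ = 0) (l : ℝ) :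
    mgf Y μ l ≤ Real.exp (l ^ 2 / 8) := by
  have hYint : Integrable Y μ := by
    refine Integrable.mono' (integrable_const (|a| + 1)) hY.aestronglyMeasurable ?_
    filter_upwards [hbd] with ω h
    rw [Real.norm_eq_abs, abs_le]
    constructor
    · linarith [h.1, neg_abs_le a]
    · linarith [h.2, le_abs_self a]
  have ha0 : a ≤ 0 := by
    have h := integral_mono_ae (integrable_const a) hYint (hbd.mono fun ω h => h.1)
    simpa [hmean] using h
  have ha1 : 0 ≤ a + 1 := by
    have h := integral_mono_ae hYint (integrable_const (a + 1)) (hbd.mono fun ω h => h.2)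
    simpa [hmean] using h
  have hexpint : Integrable (fun ω => Real.exp (l * Y ω)) μ := by
    refine Integrable.mono' (integrable_const (Real.exp (|l| * (|a| + 1))))
      ((hY.const_mul l).exp).aestronglyMeasurable ?_
    filter_upwards [hbd] with ω h
    rw [Real.norm_eq_abs, abs_of_pos (Real.exp_pos _), Real.exp_le_exp]
    have hYa : |Y ω| ≤ |a| + 1 := by
      rw [abs_le]
      constructor
      · linarith [h.1, neg_abs_le a]
      · linarith [h.2, le_abs_self a]
    calc l * Y ω ≤ |l * Y ω| := le_abs_self _
      _ = |l| * |Y ω| := abs_mul _ _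
      _ ≤ |l| * (|a| + 1) := by gcongr
  -- convexity bound pointwise
  have hpt : ∀ᵐ ω ∂μ, Real.exp (l * Y ω) ≤
      (a + 1 - Y ω) * Real.exp (l * a) + (Y ω - a) * Real.exp (l * (a + 1)) := by
    filter_upwards [hbd] with ω h
    obtain ⟨h1', h2'⟩ := h
    have hc := convexOn_exp.2 (Set.mem_univ (l * a)) (Set.mem_univ (l * (a + 1)))
      (by linarith : (0:ℝ) ≤ a + 1 - Y ω) (by linarith : (0:ℝ) ≤ Y ω - a)
      (by ring : (a + 1 - Y ω) + (Y ω - a) = 1)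
    simp only [smul_eq_mul] at hc
    have harg : (a + 1 - Y ω) * (l * a) + (Y ω - a) * (l * (a + 1)) = l * Y ω := by ring
    rwa [harg] at hc
  have hint1 : Integrable (fun ω => (a + 1 - Y ω) * Real.exp (l * a)) μ :=
    ((integrable_const (a + 1)).sub hYint).mul_const _
  have hint2 : Integrable (fun ω => (Y ω - a) * Real.exp (l * (a + 1))) μ :=
    (hYint.sub (integrable_const a)).mul_const _
  have hmgf : mgf Y μ l ≤ (a + 1) * Real.exp (l * a) - a * Real.exp (l * (a + 1)) := by
    have h := integral_mono_ae hexpint (hint1.add hint2) hpt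
    simp only [Pi.add_apply] at h
    rw [integral_add hint1 hint2, integral_mul_const, integral_mul_const,
      integral_sub (integrable_const (a + 1)) hYint, integral_sub hYint (integrable_const a),
      hmean, integral_const, integral_const] at h
    simp only [probReal_univ, measure_univ, ENNReal.toReal_one, smul_eq_mul, one_mul] at h
    calc mgf Y μ l = ∫ ω, Real.exp (l * Y ω) ∂μ := rfl
      _ ≤ _ := h
      _ = (a + 1) * Real.exp (l * a) - a * Real.exp (l * (a + 1)) := by ring
  refine hmgf.trans ?_
  have key := ucb_key_ineq (-a) (by linarith) (by linarith) l
  calc (a + 1) * Real.exp (l * a) - a * Real.exp (l * (a + 1))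
      = Real.exp (l * a) * (1 - (-a) + (-a) * Real.exp l) := by
        rw [show l * (a + 1) = l * a + l by ring, Real.exp_add]; ring
    _ ≤ Real.exp (l * a) * Real.exp ((-a) * l + l ^ 2 / 8) := by
        exact mul_le_mul_of_nonneg_left key (Real.exp_pos _).le
    _ = Real.exp (l ^ 2 / 8) := by rw [← Real.exp_add]; ring_nf

/-- Underestimation bound: the expected amount by which the true mean exceeds the truncated
UCB estimate after `n` observations is at most `t^{-β²/2}`. -/
theorem ucb_underestimate_bound
    {Ω : Type*} {m0 : MeasurableSpace Ω} (μ : Measure Ω) [IsProbabilityMeasure μ]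
    (X : ℕ → Ω → ℝ) (hmeas : ∀ i, Measurable (X i))
    (hindep : iIndepFun X μ)
    (hident : ∀ i, IdentDistrib (X i) (X 0) μ μ)
    (hbdd : ∀ i, ∀ᵐ ω ∂μ, X i ω ∈ Set.Icc (-1 : ℝ) 0)
    (m : ℝ) (hm : m = ∫ ω, X 0 ω ∂μ)
    (n t : ℕ) (hn : 1 ≤ n) (ht : 1 ≤ t) (β : ℝ) (hβ : 0 ≤ β) :
    ∫ ω, max 0
        (m - min ((1 / (n : ℝ)) * ∑ i ∈ Finset.range n, X i ω
            + β * Real.sqrt (Real.log t / (4 * (n : ℝ)))) 0) ∂μ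
      ≤ (t : ℝ) ^ (-(β ^ 2) / 2) := by
  have hnpos : (0:ℝ) < n := by exact_mod_cast hn
  have htpos : (0:ℝ) < t := by exact_mod_cast Nat.lt_of_lt_of_le Nat.zero_lt_one ht
  have hlogt : 0 ≤ Real.log t := Real.log_nonneg (by exact_mod_cast ht)
  set c : ℝ := β * Real.sqrt (Real.log t / (4 * (n : ℝ))) with hc
  have hcnn : 0 ≤ c := mul_nonneg hβ (Real.sqrt_nonneg _)
  have hc2 : c ^ 2 = β ^ 2 * (Real.log t / (4 * (n : ℝ))) := by
    rw [hc, mul_pow, Real.sq_sqrt (by positivity)]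
  -- integrability and means
  have hXint : ∀ i, Integrable (X i) μ := by
    intro i
    refine Integrable.mono' (integrable_const 1) (hmeas i).aestronglyMeasurable ?_
    filter_upwards [hbdd i] with ω h
    rw [Real.norm_eq_abs, abs_le]
    exact ⟨by linarith [h.1], by linarith [h.2]⟩
  have hmeanX : ∀ i, ∫ ω, X i ω ∂μ = m := fun i => by
    rw [hm]; exact (hident i).integral_eq
  have hm0 : m ≤ 0 := by
    rw [hm]
    have h := integral_mono_ae (hXint 0) (integrable_const (0:ℝ)) ((hbdd 0).mono fun ω h => h.2)
    simpa using h
  have hm1 : -1 ≤ m := by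
    rw [hm]
    have h := integral_mono_ae (integrable_const (-1:ℝ)) (hXint 0) ((hbdd 0).mono fun ω h => h.1)
    simpa using h
  -- centered variables
  set Z : ℕ → Ω → ℝ := fun i ω => m - X i ω with hZ
  have hZmeas : ∀ i, Measurable (Z i) := fun i => measurable_const.sub (hmeas i)
  have hZindep : iIndepFun Z μ :=
    hindep.comp (fun _ x => m - x) (fun _ => measurable_const.sub measurable_id)
  have hZbd : ∀ i, ∀ᵐ ω ∂μ, Z i ω ∈ Set.Icc m (m + 1) := fun i =>
    (hbdd i).mono fun ω h => ⟨by simp only [hZ]; linarith [h.2], by simp only [hZ]; linarith [h.1]⟩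
  have hZmean : ∀ i, ∫ ω, Z i ω ∂μ = 0 := fun i => by
    simp only [hZ]
    rw [integral_sub (integrable_const m) (hXint i), integral_const, hmeanX i]
    simp
  -- the bad event
  set A : Set Ω := {ω | (n:ℝ) * c ≤ (∑ i ∈ Finset.range n, Z i) ω} with hA
  have hAmeas : MeasurableSet A := by
    have hs : Measurable fun ω => (∑ i ∈ Finset.range n, Z i) ω := by
      simp only [Finset.sum_apply]
      exact Finset.measurable_sum _ fun i _ => hZmeas i
    exact measurableSet_le measurable_const hs
  -- pointwise bound
  have hpt : ∀ᵐ ω ∂μ, max 0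
      (m - min ((1 / (n : ℝ)) * ∑ i ∈ Finset.range n, X i ω + c) 0)
      ≤ A.indicator (fun _ => (1:ℝ)) ω := by
    have hball : ∀ᵐ ω ∂μ, ∀ i ∈ Finset.range n, X i ω ∈ Set.Icc (-1:ℝ) 0 :=
      (MeasureTheory.ae_ball_iff (Finset.countable_toSet _)).mpr fun i _ => hbdd i
    filter_upwards [hball] with ω hω
    by_cases hmem : ω ∈ A
    · rw [Set.indicator_of_mem hmem]
      have hs : -(n:ℝ) ≤ ∑ i ∈ Finset.range n, X i ω := by
        calc -(n:ℝ) = ∑ _i ∈ Finset.range n, (-1:ℝ) := by simp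
          _ ≤ _ := Finset.sum_le_sum fun i hi => (hω i hi).1
      have hxhat : -1 ≤ (1 / (n:ℝ)) * ∑ i ∈ Finset.range n, X i ω := by
        rw [one_div, inv_mul_eq_div, le_div_iff₀ hnpos]
        linarith
      have hminge : -1 ≤ min ((1 / (n:ℝ)) * ∑ i ∈ Finset.range n, X i ω + c) 0 :=
        le_min (by linarith) (by norm_num)
      exact max_le (by norm_num) (by linarith)
    · rw [Set.indicator_of_notMem hmem]
      have hlt : (∑ i ∈ Finset.range n, Z i) ω < (n:ℝ) * c := not_le.mp hmem
      have hsum : (∑ i ∈ Finset.range n, Z i) ω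
          = (n:ℝ) * m - ∑ i ∈ Finset.range n, X i ω := by
        simp only [Finset.sum_apply, hZ, Finset.sum_sub_distrib, Finset.sum_const,
          Finset.card_range, nsmul_eq_mul]
      rw [hsum] at hlt
      have hmlt : m ≤ (1 / (n:ℝ)) * ∑ i ∈ Finset.range n, X i ω + c := by
        have h2 : (n:ℝ) * m ≤ (n:ℝ) * ((1 / (n:ℝ)) * ∑ i ∈ Finset.range n, X i ω + c) := by
          have hS : (n:ℝ) * ((1 / (n:ℝ)) * ∑ i ∈ Finset.range n, X i ω + c)
              = (∑ i ∈ Finset.range n, X i ω) + (n:ℝ) * c := by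
            field_simp
          rw [hS]; linarith
        exact (mul_le_mul_iff_right₀ hnpos).mp h2
      exact max_le le_rfl (sub_nonpos.mpr (le_min hmlt hm0))
  -- integrability of the integrand
  have hintmeas : Measurable (fun ω => max 0
      (m - min ((1 / (n : ℝ)) * ∑ i ∈ Finset.range n, X i ω + c) 0)) := by
    apply Measurable.max measurable_const
    apply Measurable.sub measurable_const
    exact (((Finset.measurable_sum _ fun i _ => hmeas i).const_mul _).add_const c).min
      measurable_const
  have hibd : Integrable (fun ω => max 0
      (m - min ((1 / (n : ℝ)) * ∑ i ∈ Finset.range n, X i ω + c) 0)) μ := by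
    refine Integrable.mono' (integrable_const 1) hintmeas.aestronglyMeasurable ?_
    filter_upwards [hpt] with ω h
    rw [Real.norm_eq_abs, abs_of_nonneg (le_max_left _ _)]
    refine h.trans ?_
    by_cases hmem : ω ∈ A <;> simp [hmem]
  -- first step: integral ≤ μ A
  have hstep1 : ∫ ω, max 0
      (m - min ((1 / (n : ℝ)) * ∑ i ∈ Finset.range n, X i ω + c) 0) ∂μ
      ≤ (μ A).toReal := by
    have h := integral_mono_ae hibd ((integrable_const (1:ℝ)).indicator hAmeas) hpt
    have heq : ∫ ω, A.indicator (fun _ => (1:ℝ)) ω ∂μ = (μ A).toReal := by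
      rw [← measureReal_def]; exact MeasureTheory.integral_indicator_one (μ := μ) hAmeas
    rwa [heq] at h
  -- Chernoff bound
  have hexpi : ∀ i ∈ Finset.range n,
      Integrable (fun ω => Real.exp (4 * c * Z i ω)) μ := by
    intro i _
    refine Integrable.mono' (integrable_const (Real.exp (4 * c)))
      (((hZmeas i).const_mul _).exp).aestronglyMeasurable ?_
    filter_upwards [hZbd i] with ω h
    rw [Real.norm_eq_abs, abs_of_pos (Real.exp_pos _), Real.exp_le_exp]
    have : Z i ω ≤ 1 := by linarith [h.2, hm0]
    nlinarith
  have hexpint : Integrable (fun ω => Real.exp (4 * c * (∑ i ∈ Finset.range n, Z i) ω)) μ :=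
    hZindep.integrable_exp_mul_sum hZmeas hexpi
  have hchern := measure_ge_le_exp_mul_mgf (μ := μ) (X := ∑ i ∈ Finset.range n, Z i)
    ((n:ℝ) * c) (by positivity : (0:ℝ) ≤ 4 * c) hexpint
  have hmgfsum : mgf (∑ i ∈ Finset.range n, Z i) μ (4 * c)
      = ∏ i ∈ Finset.range n, mgf (Z i) μ (4 * c) := hZindep.mgf_sum hZmeas _
  have hprod : ∏ i ∈ Finset.range n, mgf (Z i) μ (4 * c)
      ≤ Real.exp ((4 * c) ^ 2 / 8) ^ n := by
    calc ∏ i ∈ Finset.range n, mgf (Z i) μ (4 * c)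
        ≤ ∏ _i ∈ Finset.range n, Real.exp ((4 * c) ^ 2 / 8) :=
          Finset.prod_le_prod (fun i _ => mgf_nonneg)
            (fun i _ => ucb_hoeffding_mgf μ (Z i) (hZmeas i) m (hZbd i) (hZmean i) (4 * c))
      _ = Real.exp ((4 * c) ^ 2 / 8) ^ n := by rw [Finset.prod_const, Finset.card_range]
  have hμA : (μ A).toReal ≤ Real.exp (-(4 * c) * ((n:ℝ) * c) + (n:ℝ) * ((4 * c) ^ 2 / 8)) := by
    calc (μ A).toReal ≤ Real.exp (-(4 * c) * ((n:ℝ) * c)) * mgf (∑ i ∈ Finset.range n, Z i) μ (4 * c) := hchern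
      _ ≤ Real.exp (-(4 * c) * ((n:ℝ) * c)) * Real.exp ((4 * c) ^ 2 / 8) ^ n := by
          rw [hmgfsum]
          exact mul_le_mul_of_nonneg_left hprod (Real.exp_pos _).le
      _ = Real.exp (-(4 * c) * ((n:ℝ) * c) + (n:ℝ) * ((4 * c) ^ 2 / 8)) := by
          rw [← Real.exp_nat_mul, ← Real.exp_add]
  have hfinal : Real.exp (-(4 * c) * ((n:ℝ) * c) + (n:ℝ) * ((4 * c) ^ 2 / 8))
      = (t : ℝ) ^ (-(β ^ 2) / 2) := by
    rw [Real.rpow_def_of_pos htpos]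
    congr 1
    have harg : -(4 * c) * ((n:ℝ) * c) + (n:ℝ) * ((4 * c) ^ 2 / 8) = -2 * (n:ℝ) * c ^ 2 := by
      ring
    rw [harg, hc2]
    field_simp
    ring
  calc ∫ ω, max 0 (m - min ((1 / (n : ℝ)) * ∑ i ∈ Finset.range n, X i ω + c) 0) ∂μ
      ≤ (μ A).toReal := hstep1
    _ ≤ _ := hμA
    _ = _ := hfinal
end

section
/- Work on a probability space (Ω, 𝓕, P). Let (X_i)_{i≥1} be independent, identically distributed real-valued random variables with X_i ∈ [c, c+1] almost surely (an interval of length 1, for some real c) and common mean m = E[X_1]; write x̂_n := (1/n)·Σ_{i=1}^{n} X_i for the sample mean of the first n observations. Let β > √2, let h ≥ 2 be an integer, and let t_2 < t_3 < ⋯ < t_h be strictly increasing integers with t_a ≥ 1 for all a. Then Σ_{a=2}^{h} P( x̂_{a−1} − m > β·√( log(t_a) / (4·(a−1)) ) ) ≤ G_β, where G_β := Σ_{t=1}^{∞} t^{−β²/2} (which is finite for β > √2). -/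
open MeasureTheory ProbabilityTheory


lemma denom_pos {p : ℝ} (hp0 : 0 ≤ p) (hp1 : p ≤ 1) (u : ℝ) :
    0 < 1 - p + p * Real.exp u := by
  rcases eq_or_lt_of_le hp1 with h | h
  · subst h; simpa using Real.exp_pos u
  · have : 0 ≤ p * Real.exp u := mul_nonneg hp0 (Real.exp_pos u).le
    linarith

lemma phi_bound {p : ℝ} (hp0 : 0 ≤ p) (hp1 : p ≤ 1) {u : ℝ} (hu : 0 ≤ u) :
    Real.exp (-p * u) * (1 - p + p * Real.exp u) ≤ Real.exp (u ^ 2 / 8) := by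
  set D : ℝ → ℝ := fun x => 1 - p + p * Real.exp x with hD
  have hDpos : ∀ x, 0 < D x := fun x => denom_pos hp0 hp1 x
  set F : ℝ → ℝ := fun x => x ^ 2 / 8 + p * x - Real.log (D x) with hF
  set G : ℝ → ℝ := fun x => x / 4 + p - p * Real.exp x / D x with hG
  have hDderiv : ∀ x, HasDerivAt D (p * Real.exp x) x := fun x => by
    exact ((Real.hasDerivAt_exp x).const_mul p).const_add (1 - p)
  have hFderiv : ∀ x, HasDerivAt F (G x) x := by
    intro x
    have h1 : HasDerivAt (fun y : ℝ => y ^ 2 / 8) (x / 4) x := by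
      have := (hasDerivAt_pow 2 x).div_const 8
      simpa [pow_one] using this.congr_deriv (by ring)
    have h2 : HasDerivAt (fun y : ℝ => p * y) p x := by
      simpa using (hasDerivAt_id x).const_mul p
    have h3 : HasDerivAt (fun y : ℝ => Real.log (D y)) (p * Real.exp x / D x) x :=
      (hDderiv x).log (hDpos x).ne'
    exact (h1.add h2).sub h3
  have hGderiv : ∀ x, HasDerivAt G
      (1 / 4 - (p * Real.exp x * D x - p * Real.exp x * (p * Real.exp x)) / (D x) ^ 2) x := by
    intro x
    have h1 : HasDerivAt (fun y : ℝ => y / 4 + p) (1 / 4) x := by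
      simpa using ((hasDerivAt_id x).div_const 4).add_const p
    have h2 : HasDerivAt (fun y : ℝ => p * Real.exp y / D y)
        ((p * Real.exp x * D x - p * Real.exp x * (p * Real.exp x)) / (D x) ^ 2) x :=
      ((Real.hasDerivAt_exp x).const_mul p).div (hDderiv x) (hDpos x).ne'
    exact h1.sub h2
  have hG'nonneg : ∀ x, 0 ≤ 1 / 4 -
      (p * Real.exp x * D x - p * Real.exp x * (p * Real.exp x)) / (D x) ^ 2 := by
    intro x
    have hnum : p * Real.exp x * D x - p * Real.exp x * (p * Real.exp x)
        = p * Real.exp x * (1 - p) := by simp [hD]; ring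
    have hamgm : p * Real.exp x * (1 - p) ≤ (D x) ^ 2 / 4 := by
      nlinarith [sq_nonneg (p * Real.exp x - (1 - p)), hDpos x]
    have h2 : (p * Real.exp x * D x - p * Real.exp x * (p * Real.exp x)) / (D x) ^ 2 ≤ 1 / 4 := by
      rw [hnum, div_le_iff₀ (pow_pos (hDpos x) 2)]
      linarith
    linarith
  have hGmono : Monotone G :=
    monotone_of_deriv_nonneg (fun x => (hGderiv x).differentiableAt) (fun x => by
      rw [(hGderiv x).deriv]; exact hG'nonneg x)
  have hG0 : G 0 = 0 := by simp [hG, hD]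
  have hGnonneg : ∀ x, 0 ≤ x → 0 ≤ G x := fun x hx => hG0 ▸ hGmono hx
  have hFmono : MonotoneOn F (Set.Ici 0) := by
    refine monotoneOn_of_deriv_nonneg (convex_Ici 0)
      (fun x _ => ((hFderiv x).differentiableAt).continuousAt.continuousWithinAt)
      (fun x _ => ((hFderiv x).differentiableAt).differentiableWithinAt) ?_
    intro x hx
    rw [interior_Ici] at hx
    rw [(hFderiv x).deriv]
    exact hGnonneg x hx.le
  have hF0 : F 0 = 0 := by simp [hF, hD]
  have hFu : 0 ≤ F u := hF0 ▸ hFmono Set.self_mem_Ici hu hu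
  have hlog : Real.log (D u) ≤ u ^ 2 / 8 + p * u := by
    simp only [hF] at hFu; linarith
  have : D u ≤ Real.exp (u ^ 2 / 8 + p * u) := by
    rw [← Real.exp_log (hDpos u)]
    exact Real.exp_le_exp.mpr hlog
  calc Real.exp (-p * u) * (1 - p + p * Real.exp u)
      ≤ Real.exp (-p * u) * Real.exp (u ^ 2 / 8 + p * u) :=
        mul_le_mul_of_nonneg_left this (Real.exp_pos _).le
    _ = Real.exp (u ^ 2 / 8) := by rw [← Real.exp_add]; ring_nf
lemma hoeffding_mgf {Ω : Type*} {m0 : MeasurableSpace Ω} (μ : Measure Ω)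
    [IsProbabilityMeasure μ] {X : Ω → ℝ} (hX : Measurable X) {c : ℝ}
    (hb : ∀ᵐ ω ∂μ, X ω ∈ Set.Icc c (c + 1)) {l : ℝ} (hl : 0 ≤ l) :
    mgf X μ l ≤ Real.exp (l * (∫ ω, X ω ∂μ) + l ^ 2 / 8) := by
  have hXint : Integrable X μ := by
    refine Integrable.mono' (integrable_const (max |c| |c + 1|)) hX.aestronglyMeasurable ?_
    filter_upwards [hb] with ω hω
    simpa using abs_le_max_abs_abs hω.1 hω.2
  set m : ℝ := ∫ ω, X ω ∂μ with hm
  have hmc : c ≤ m := by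
    have := integral_mono_ae (integrable_const c) hXint
      (by filter_upwards [hb] with ω hω using hω.1)
    simpa using this
  have hmc1 : m ≤ c + 1 := by
    have := integral_mono_ae hXint (integrable_const (c + 1))
      (by filter_upwards [hb] with ω hω using hω.2)
    simpa using this
  set p : ℝ := m - c with hp
  have hp0 : 0 ≤ p := by simp [hp]; linarith
  have hp1 : p ≤ 1 := by simp [hp]; linarith
  set K1 : ℝ := Real.exp (l * m) * Real.exp (l * (c - m)) with hK1
  set K2 : ℝ := Real.exp (l * m) * Real.exp (l * (c + 1 - m)) with hK2
  have hae : ∀ᵐ ω ∂μ, Real.exp (l * X ω)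
      ≤ (c + 1 - X ω) * K1 + (X ω - c) * K2 := by
    filter_upwards [hb] with ω hω
    have hα : (0:ℝ) ≤ c + 1 - X ω := by linarith [hω.2]
    have hβ' : (0:ℝ) ≤ X ω - c := by linarith [hω.1]
    have hsum : (c + 1 - X ω) + (X ω - c) = 1 := by ring
    have hconv := convexOn_exp.2 (Set.mem_univ (l * (c - m))) (Set.mem_univ (l * (c + 1 - m)))
      hα hβ' hsum
    have harg : (c + 1 - X ω) • (l * (c - m)) + (X ω - c) • (l * (c + 1 - m))
        = l * (X ω - m) := by simp only [smul_eq_mul]; ring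
    rw [harg] at hconv
    have hx : Real.exp (l * X ω) = Real.exp (l * m) * Real.exp (l * (X ω - m)) := by
      rw [← Real.exp_add]; ring_nf
    rw [hx, hK1, hK2]
    calc Real.exp (l * m) * Real.exp (l * (X ω - m))
        ≤ Real.exp (l * m) * ((c + 1 - X ω) * Real.exp (l * (c - m))
            + (X ω - c) * Real.exp (l * (c + 1 - m))) :=
          mul_le_mul_of_nonneg_left (by simpa [smul_eq_mul] using hconv) (Real.exp_pos _).le
      _ = (c + 1 - X ω) * (Real.exp (l * m) * Real.exp (l * (c - m)))
            + (X ω - c) * (Real.exp (l * m) * Real.exp (l * (c + 1 - m))) := by ring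
  have hLint : Integrable (fun ω => Real.exp (l * X ω)) μ := by
    refine Integrable.mono' (integrable_const (Real.exp (l * (c + 1))))
      ((hX.const_mul l).exp.aestronglyMeasurable) ?_
    filter_upwards [hb] with ω hω
    rw [Real.norm_eq_abs, abs_of_pos (Real.exp_pos _)]
    exact Real.exp_le_exp.mpr (mul_le_mul_of_nonneg_left hω.2 hl)
  have hR1 : Integrable (fun ω => (c + 1 - X ω) * K1) μ :=
    ((integrable_const (c + 1)).sub hXint).mul_const K1
  have hR2 : Integrable (fun ω => (X ω - c) * K2) μ :=
    (hXint.sub (integrable_const c)).mul_const K2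
  have hint_le : ∫ ω, Real.exp (l * X ω) ∂μ
      ≤ ∫ ω, ((c + 1 - X ω) * K1 + (X ω - c) * K2) ∂μ :=
    integral_mono_ae hLint (hR1.add hR2) hae
  have hRval : ∫ ω, ((c + 1 - X ω) * K1 + (X ω - c) * K2) ∂μ
      = (c + 1 - m) * K1 + (m - c) * K2 := by
    rw [integral_add hR1 hR2, integral_mul_const, integral_mul_const,
      integral_sub (integrable_const (c + 1)) hXint, integral_sub hXint (integrable_const c)]
    simp [← hm]
  have hkey : (c + 1 - m) * K1 + (m - c) * K2
      ≤ Real.exp (l * m) * Real.exp (l ^ 2 / 8) := by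
    have hphi := phi_bound hp0 hp1 hl
    have heq : (c + 1 - m) * K1 + (m - c) * K2
        = Real.exp (l * m) * (Real.exp (-p * l) * (1 - p + p * Real.exp l)) := by
      rw [hK1, hK2, hp]
      have e1 : Real.exp (l * (c - m)) = Real.exp (-(m - c) * l) := by ring_nf
      have e2 : Real.exp (l * (c + 1 - m)) = Real.exp (-(m - c) * l) * Real.exp l := by
        rw [← Real.exp_add]; ring_nf
      rw [e1, e2]; ring
    rw [heq]
    exact mul_le_mul_of_nonneg_left hphi (Real.exp_pos _).le
  have : mgf X μ l = ∫ ω, Real.exp (l * X ω) ∂μ := rfl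
  rw [this, Real.exp_add]
  calc ∫ ω, Real.exp (l * X ω) ∂μ ≤ (c + 1 - m) * K1 + (m - c) * K2 := hint_le.trans_eq hRval
    _ ≤ Real.exp (l * m) * Real.exp (l ^ 2 / 8) := hkey

lemma chernoff_sum {Ω : Type*} {m0 : MeasurableSpace Ω} (μ : Measure Ω)
    [IsProbabilityMeasure μ] (X : ℕ → Ω → ℝ) (hmeas : ∀ i, Measurable (X i))
    (hindep : iIndepFun X μ)
    (hident : ∀ i, IdentDistrib (X i) (X 0) μ μ)
    (c : ℝ) (hbdd : ∀ i, ∀ᵐ ω ∂μ, X i ω ∈ Set.Icc c (c + 1))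
    (m : ℝ) (hm : m = ∫ ω, X 0 ω ∂μ)
    (n : ℕ) (r : ℝ) (hr : 0 ≤ r) :
    (μ {ω | (n : ℝ) * (m + r) ≤ ∑ i ∈ Finset.range n, X i ω}).toReal
      ≤ Real.exp (-(2 * n * r ^ 2)) := by
  set l : ℝ := 4 * r with hl_def
  have hl : 0 ≤ l := by positivity
  have hSmeas : Measurable (fun ω => ∑ i ∈ Finset.range n, X i ω) :=
    Finset.measurable_sum _ (fun i _ => hmeas i)
  have hball : ∀ᵐ ω ∂μ, ∀ i, X i ω ∈ Set.Icc c (c + 1) := ae_all_iff.mpr hbdd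
  have hSint : Integrable (fun ω => Real.exp (l * ∑ i ∈ Finset.range n, X i ω)) μ := by
    refine Integrable.mono' (integrable_const (Real.exp (l * (n * (c + 1)))))
      ((hSmeas.const_mul l).exp.aestronglyMeasurable) ?_
    filter_upwards [hball] with ω hω
    rw [Real.norm_eq_abs, abs_of_pos (Real.exp_pos _)]
    refine Real.exp_le_exp.mpr (mul_le_mul_of_nonneg_left ?_ hl)
    calc ∑ i ∈ Finset.range n, X i ω ≤ ∑ i ∈ Finset.range n, (c + 1) :=
          Finset.sum_le_sum (fun i _ => (hω i).2)
      _ = n * (c + 1) := by simp [Finset.sum_const, Finset.card_range]; ring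
  have hcher := measure_ge_le_exp_mul_mgf (μ := μ) (X := ∑ i ∈ Finset.range n, X i)
    ((n : ℝ) * (m + r)) hl (by simpa [Finset.sum_apply] using hSint)
  have hset : {ω | (n : ℝ) * (m + r) ≤ (∑ i ∈ Finset.range n, X i) ω}
      = {ω | (n : ℝ) * (m + r) ≤ ∑ i ∈ Finset.range n, X i ω} := by
    simp [Finset.sum_apply]
  rw [hset] at hcher
  have hmgf : mgf (∑ i ∈ Finset.range n, X i) μ l = ∏ i ∈ Finset.range n, mgf (X i) μ l :=
    hindep.mgf_sum hmeas (Finset.range n)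
  have hbound : ∀ i ∈ Finset.range n, mgf (X i) μ l ≤ Real.exp (l * m + l ^ 2 / 8) := by
    intro i _
    have h1 := hoeffding_mgf μ (hmeas i) (hbdd i) hl
    have h2 : ∫ ω, X i ω ∂μ = m := by rw [hm]; exact (hident i).integral_eq
    rwa [h2] at h1
  have hprod : ∏ i ∈ Finset.range n, mgf (X i) μ l ≤ Real.exp (l * m + l ^ 2 / 8) ^ n := by
    calc ∏ i ∈ Finset.range n, mgf (X i) μ l
        ≤ ∏ i ∈ Finset.range n, Real.exp (l * m + l ^ 2 / 8) :=
          Finset.prod_le_prod (fun i _ => mgf_nonneg) hbound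
      _ = Real.exp (l * m + l ^ 2 / 8) ^ n := by simp [Finset.prod_const, Finset.card_range]
  calc (μ {ω | (n : ℝ) * (m + r) ≤ ∑ i ∈ Finset.range n, X i ω}).toReal
      ≤ Real.exp (-l * ((n : ℝ) * (m + r))) * mgf (∑ i ∈ Finset.range n, X i) μ l := hcher
    _ ≤ Real.exp (-l * ((n : ℝ) * (m + r))) * Real.exp (l * m + l ^ 2 / 8) ^ n := by
        exact mul_le_mul_of_nonneg_left (hmgf ▸ hprod) (Real.exp_pos _).le
    _ = Real.exp (-(2 * n * r ^ 2)) := by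
        rw [← Real.exp_nat_mul, ← Real.exp_add]
        congr 1
        rw [hl_def]; ring

set_option maxHeartbeats 1000000 in
/-- The total probability of the bad events, in which the empirical mean after `a - 1`
observations overestimates the true mean by more than the confidence radius at the distinct
positive time slots `t a`, is at most the convergent series `G_β`. -/
theorem sum_bad_event_prob_le_Gbeta
    {Ω : Type*} {m0 : MeasurableSpace Ω} (μ : Measure Ω) [IsProbabilityMeasure μ]
    (X : ℕ → Ω → ℝ) (hmeas : ∀ i, Measurable (X i))
    (hindep : iIndepFun X μ)
    (hident : ∀ i, IdentDistrib (X i) (X 0) μ μ)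
    (c : ℝ) (hbdd : ∀ i, ∀ᵐ ω ∂μ, X i ω ∈ Set.Icc c (c + 1))
    (m : ℝ) (hm : m = ∫ ω, X 0 ω ∂μ)
    (β : ℝ) (hβ : Real.sqrt 2 < β)
    (h : ℕ) (hh : 2 ≤ h)
    (t : ℕ → ℕ)
    (hmono : ∀ a, 2 ≤ a → a < h → t a < t (a + 1))
    (hpos : ∀ a, 2 ≤ a → a ≤ h → 1 ≤ t a) :
    ∑ a ∈ Finset.Icc 2 h,
        (μ {ω | β * Real.sqrt (Real.log (t a) / (4 * ((a : ℝ) - 1)))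
            < (1 / ((a : ℝ) - 1)) * (∑ i ∈ Finset.range (a - 1), X i ω) - m}).toReal
      ≤ ∑' n : ℕ, ((n : ℝ) + 1) ^ (-(β ^ 2) / 2) := by
  have hβ0 : 0 ≤ β := le_trans (Real.sqrt_nonneg 2) hβ.le
  have hβ2 : 2 < β ^ 2 := by
    have := pow_lt_pow_left₀ hβ (Real.sqrt_nonneg 2) two_ne_zero
    rwa [Real.sq_sqrt (by norm_num : (0:ℝ) ≤ 2)] at this
  set q : ℝ := -(β ^ 2) / 2 with hq_def
  have hq : q < -1 := by rw [hq_def]; linarith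
  set g : ℕ → ℝ := fun n => ((n : ℝ) + 1) ^ q with hg_def
  have hgsummable : Summable g := by
    have h1 : Summable (fun n : ℕ => (n : ℝ) ^ q) := Real.summable_nat_rpow.mpr hq
    have h2 : Summable (fun n : ℕ => ((n + 1 : ℕ) : ℝ) ^ q) :=
      (summable_nat_add_iff 1).mpr h1
    refine h2.congr fun n => ?_
    rw [hg_def]; push_cast; ring_nf
  have hgnonneg : ∀ n, 0 ≤ g n := fun n => Real.rpow_nonneg (by positivity) q
  -- strict monotonicity of t on [2, h]
  have tmono : ∀ a b, 2 ≤ a → a < b → b ≤ h → t a < t b := by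
    intro a b ha hab hbh
    induction b with
    | zero => omega
    | succ b ih =>
      rcases Nat.lt_succ_iff_lt_or_eq.mp hab with h' | h'
      · exact lt_trans (ih h' (by omega)) (hmono b (by omega) (by omega))
      · subst h'; exact hmono a ha (by omega)
  have hinj : Set.InjOn (fun a => t a - 1) (Finset.Icc 2 h : Set ℕ) := by
    intro a ha b hb hab
    simp only [Finset.coe_Icc, Set.mem_Icc] at ha hb
    simp only at hab
    by_contra hne
    rcases Nat.lt_or_ge a b with h' | h'
    · have hlt := tmono a b ha.1 h' hb.2
      have h1a := hpos a ha.1 ha.2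
      omega
    · rcases Nat.lt_or_ge b a with h'' | h''
      · have hlt := tmono b a hb.1 h'' ha.2
        have h1b := hpos b hb.1 hb.2
        omega
      · omega
  -- per-term bound
  have hterm : ∀ a ∈ Finset.Icc 2 h,
      (μ {ω | β * Real.sqrt (Real.log (t a) / (4 * ((a : ℝ) - 1)))
          < (1 / ((a : ℝ) - 1)) * (∑ i ∈ Finset.range (a - 1), X i ω) - m}).toReal
        ≤ g (t a - 1) := by
    intro a ha
    rw [Finset.mem_Icc] at ha
    have ha2 : 2 ≤ a := ha.1
    have hA : (0:ℝ) < (a : ℝ) - 1 := by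
      have : (2:ℝ) ≤ (a:ℝ) := by exact_mod_cast ha2
      linarith
    have hncast : ((a - 1 : ℕ) : ℝ) = (a : ℝ) - 1 := by
      push_cast [Nat.cast_sub (by omega : 1 ≤ a)]; ring
    have hT1 : 1 ≤ t a := hpos a ha.1 ha.2
    have hTpos : (0:ℝ) < (t a : ℝ) := by exact_mod_cast hT1
    have hlogT : 0 ≤ Real.log (t a) := Real.log_nonneg (by exact_mod_cast hT1)
    set r : ℝ := β * Real.sqrt (Real.log (t a) / (4 * ((a : ℝ) - 1))) with hr_def
    have hr : 0 ≤ r := mul_nonneg hβ0 (Real.sqrt_nonneg _)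
    have hsub : {ω | r < (1 / ((a : ℝ) - 1)) * (∑ i ∈ Finset.range (a - 1), X i ω) - m}
        ⊆ {ω | ((a : ℝ) - 1) * (m + r) ≤ ∑ i ∈ Finset.range (a - 1), X i ω} := by
      intro ω hω
      simp only [Set.mem_setOf_eq] at hω ⊢
      set S := ∑ i ∈ Finset.range (a - 1), X i ω with hS
      have h2 : m + r < (1 / ((a : ℝ) - 1)) * S := by linarith
      have h3 : ((a:ℝ) - 1) * ((1 / ((a : ℝ) - 1)) * S) = S := by field_simp
      have h4 := mul_lt_mul_of_pos_left h2 hA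
      rw [h3] at h4
      linarith
    have hcher := chernoff_sum μ X hmeas hindep hident c hbdd m hm (a - 1) r hr
    rw [hncast] at hcher
    have hmeasle : (μ {ω | r < (1 / ((a : ℝ) - 1)) * (∑ i ∈ Finset.range (a - 1), X i ω) - m}).toReal
        ≤ (μ {ω | ((a : ℝ) - 1) * (m + r) ≤ ∑ i ∈ Finset.range (a - 1), X i ω}).toReal :=
      ENNReal.toReal_mono (measure_ne_top μ _) (measure_mono hsub)
    have hval : Real.exp (-(2 * ((a : ℝ) - 1) * r ^ 2)) = g (t a - 1) := by
      have hr2 : r ^ 2 = β ^ 2 * (Real.log (t a) / (4 * ((a : ℝ) - 1))) := by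
        rw [hr_def, mul_pow, Real.sq_sqrt (by positivity)]
      have hTcast : ((t a - 1 : ℕ) : ℝ) + 1 = (t a : ℝ) := by
        push_cast [Nat.cast_sub hT1]; ring
      rw [hg_def]
      simp only
      rw [hTcast, Real.rpow_def_of_pos hTpos]
      congr 1
      rw [hr2, hq_def]
      field_simp
      ring

    calc (μ {ω | r < (1 / ((a : ℝ) - 1)) * (∑ i ∈ Finset.range (a - 1), X i ω) - m}).toReal
        ≤ Real.exp (-(2 * ((a : ℝ) - 1) * r ^ 2)) := hmeasle.trans hcher
      _ = g (t a - 1) := hval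
  calc ∑ a ∈ Finset.Icc 2 h,
        (μ {ω | β * Real.sqrt (Real.log (t a) / (4 * ((a : ℝ) - 1)))
            < (1 / ((a : ℝ) - 1)) * (∑ i ∈ Finset.range (a - 1), X i ω) - m}).toReal
      ≤ ∑ a ∈ Finset.Icc 2 h, g (t a - 1) := Finset.sum_le_sum hterm
    _ = ∑ n ∈ (Finset.Icc 2 h).image (fun a => t a - 1), g n :=
        (Finset.sum_image (fun a ha b hb hab => hinj (by simpa using ha) (by simpa using hb) hab)).symm
    _ ≤ ∑' n : ℕ, g n := Summable.sum_le_tsum _ (fun n _ => hgnonneg n) hgsummable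
    _ = ∑' n : ℕ, ((n : ℝ) + 1) ^ (-(β ^ 2) / 2) := by rw [hg_def, hq_def]
end
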